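/- Let M be a module over the algebra k𝔾_a = k[u_0,u_1,…]/(u_0^p,u_1^p,…) such that for every m ∈ M only finitely many of the elements v_j act nontrivially on m (i.e., v_j(m) = 0 for all but finitely many j). Then the map Δ_M : M → M ⊗ k[T] defined by Δ_M(m) = Σ_j v_j(m) ⊗ T^j is a well-defined right k[T]-comodule structure on M (i.e., a rational 𝔾_a-module structure) whose induced k𝔾_a-action is the given one. Conversely, every rational 𝔾_a-module satisfies this finiteness condition. -/

import Mathlib

set_option maxHeartbeats 1000000

noncomputable section

open TensorProduct Polynomial

variable (k : Type) [Field k]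

def gaComul : k[X] →ₐ[k] k[X] ⊗[k] k[X] :=
  aeval ((X : k[X]) ⊗ₜ[k] (1 : k[X]) + (1 : k[X]) ⊗ₜ[k] (X : k[X]))

def gaCounit : k[X] →ₐ[k] k := aeval 0

variable {k}

def IsGaComodule {M : Type} [AddCommGroup M] [Module k M]
    (ρ : M →ₗ[k] M ⊗[k] k[X]) : Prop :=
  (∀ m, (TensorProduct.assoc k M (Polynomial k) (Polynomial k))
        (LinearMap.rTensor (Polynomial k) ρ (ρ m)) =
      LinearMap.lTensor M (gaComul k).toLinearMap (ρ m)) ∧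
  (∀ m, (TensorProduct.rid k M) (LinearMap.lTensor M (gaCounit k).toLinearMap (ρ m)) = m)

def vAct {M : Type} [AddCommGroup M] [Module k M]
    (ρ : M →ₗ[k] M ⊗[k] k[X]) (j : ℕ) : M →ₗ[k] M :=
  (TensorProduct.rid k M).toLinearMap ∘ₗ LinearMap.lTensor M (lcoeff k j) ∘ₗ ρ

variable (k)

/-- The group algebra `k𝔾ₐ = k[u₀,u₁,…]/(u₀^p, u₁^p, …)`. -/
abbrev kGaAlg (p : ℕ) : Type :=
  MvPolynomial ℕ k ⧸ Ideal.span (Set.range fun i : ℕ => (MvPolynomial.X i : MvPolynomial ℕ k) ^ p)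

/-- the `i`-th digit of `j` in base `p` -/
def digit (p j i : ℕ) : ℕ := (Nat.digits p j).getD i 0

/-- The element `v_j = u₀^{j₀} ⋯ u_{r-1}^{j_{r-1}} / (j₀! ⋯ j_{r-1}!)` of `k𝔾ₐ`,
where `j = Σ jₗ pˡ` is the base-`p` expansion. -/
def vElt (p j : ℕ) : kGaAlg k p :=
  Ideal.Quotient.mk _
    ((∏ i ∈ Finset.range (j + 1), ((Nat.factorial (digit p j i) : k))⁻¹) •
      ∏ i ∈ Finset.range (j + 1), MvPolynomial.X i ^ (digit p j i))

/-! ### Auxiliary lemmas: base-`p` digits -/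

theorem digit_eq (p : ℕ) (hp : 2 ≤ p) (j i : ℕ) : digit p j i = j / p ^ i % p := by
  induction i generalizing j with
  | zero =>
    rcases Nat.eq_zero_or_pos j with h | h
    · simp [digit, h]
    · simp [digit, Nat.digits_def' hp h]
  | succ i ih =>
    rcases Nat.eq_zero_or_pos j with h | h
    · simp [digit, h]
    · have : digit p j (i+1) = digit p (j / p) i := by
        simp [digit, Nat.digits_def' hp h]
      rw [this, ih, Nat.div_div_eq_div_mul, pow_succ']

theorem digit_lt (p : ℕ) (hp : 2 ≤ p) (j i : ℕ) : digit p j i < p := by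
  rw [digit_eq p hp]; exact Nat.mod_lt _ (by omega)

theorem digit_eq_zero (p : ℕ) (hp : 2 ≤ p) {j i : ℕ} (h : j < p ^ i) : digit p j i = 0 := by
  rw [digit_eq p hp, Nat.div_eq_of_lt h, Nat.zero_mod]

theorem digit_eq_zero' (p : ℕ) (hp : 2 ≤ p) {j i : ℕ} (h : j < i + 1) : digit p j i = 0 := by
  refine digit_eq_zero p hp (lt_of_lt_of_le (lt_of_le_of_lt (by omega) (Nat.lt_two_pow_self (n := i)))
    (Nat.pow_le_pow_left hp i))

theorem mod_pow_succ' (p a l : ℕ) :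
    a % p ^ (l + 1) = a % p ^ l + p ^ l * (a / p ^ l % p) := by
  have h1 : a % (p ^ l * p) / p ^ l = a / p ^ l % p := Nat.mod_mul_right_div_self a (p^l) p
  have h2 : a % (p ^ l * p) % p ^ l = a % p ^ l := Nat.mod_mod_of_dvd a ⟨p, rfl⟩
  have h3 := Nat.div_add_mod (a % (p ^ l * p)) (p ^ l)
  rw [h1, h2] at h3
  rw [pow_succ, ← h3]
  omega

theorem div_add_of_nocarry (p a b : ℕ) (hp : 2 ≤ p)
    (h : ∀ l, a / p ^ l % p + b / p ^ l % p < p) (l : ℕ) :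
    (a + b) / p ^ l = a / p ^ l + b / p ^ l := by
  induction l with
  | zero => simp
  | succ l ih =>
    have ha := Nat.div_add_mod (a / p ^ l) p
    have hb := Nat.div_add_mod (b / p ^ l) p
    have hl := h l
    have e1 : a / p ^ (l+1) = a / p ^ l / p := by rw [Nat.div_div_eq_div_mul, pow_succ]
    have e2 : b / p ^ (l+1) = b / p ^ l / p := by rw [Nat.div_div_eq_div_mul, pow_succ]
    have e3 : (a+b) / p ^ (l+1) = (a+b) / p ^ l / p := by rw [Nat.div_div_eq_div_mul, pow_succ]
    rw [e1, e2, e3, ih]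
    have heq : a / p ^ l + b / p ^ l
        = p * (a / p^l / p + b / p^l / p) + (a / p^l % p + b/p^l % p) := by
      rw [Nat.mul_add]; omega
    rw [heq, Nat.mul_add_div (by omega : 0 < p), Nat.div_eq_of_lt hl]
    omega

theorem digit_add_of_nocarry (p a b : ℕ) (hp : 2 ≤ p)
    (h : ∀ l, a / p ^ l % p + b / p ^ l % p < p) (l : ℕ) :
    (a + b) / p ^ l % p = a / p ^ l % p + b / p ^ l % p := by
  rw [div_add_of_nocarry p a b hp h]
  have ha := Nat.div_add_mod (a / p ^ l) p
  have hb := Nat.div_add_mod (b / p ^ l) p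
  have heq : a / p ^ l + b / p ^ l
      = p * (a / p^l / p + b / p^l / p) + (a / p^l % p + b/p^l % p) := by
    rw [Nat.mul_add]; omega
  rw [heq, Nat.mul_add_mod, Nat.mod_eq_of_lt (h l)]

theorem prime_dvd_choose_of_carry (p a b : ℕ) [hp : Fact p.Prime]
    (l : ℕ) (h : p ≤ a / p ^ l % p + b / p ^ l % p) :
    p ∣ Nat.choose (a + b) a := by
  have hp2 : 2 ≤ p := hp.out.two_le
  set bd := max (Nat.log p (b + a) + 1) (l + 2) with hbd
  have key := Nat.Prime.emultiplicity_choose' (p := p) (n := b) (k := a) (b := bd) hp.out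
    (lt_of_lt_of_le (Nat.lt_succ_self _) (le_max_left _ _))
  have hmem : l + 1 ∈ Finset.filter (fun i => p ^ i ≤ a % p ^ i + b % p ^ i) (Finset.Ico 1 bd) := by
    rw [Finset.mem_filter, Finset.mem_Ico]
    refine ⟨⟨by omega, by omega⟩, ?_⟩
    rw [mod_pow_succ' p a l, mod_pow_succ' p b l, pow_succ]
    nlinarith [Nat.zero_le (a % p ^ l), Nat.zero_le (b % p ^ l), pow_pos (by omega : 0 < p) l]
  have hne : (Finset.filter (fun i => p ^ i ≤ a % p ^ i + b % p ^ i) (Finset.Ico 1 bd)).card ≠ 0 := by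
    rw [Finset.card_ne_zero]; exact ⟨l+1, hmem⟩
  have hemult : emultiplicity p (Nat.choose (b + a) a) ≠ 0 := by
    rw [key]; exact_mod_cast hne
  rw [Nat.add_comm b a] at hemult
  by_contra hdvd
  exact hemult (emultiplicity_eq_zero.mpr hdvd)

/-! ### Auxiliary lemmas: the elements `v_j` -/

variable {k}

theorem vElt_eq_prod (p : ℕ) (hp : 2 ≤ p) (j N : ℕ) (h : j < N) :
    vElt k p j = (∏ i ∈ Finset.range N, ((Nat.factorial (digit p j i) : k))⁻¹) •
      Ideal.Quotient.mk _ (∏ i ∈ Finset.range N, MvPolynomial.X i ^ (digit p j i)) := by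
  rw [vElt]
  have hsub : Finset.range (j+1) ⊆ Finset.range N := by
    intro x hx; simp only [Finset.mem_range] at *; omega
  have hz : ∀ x ∈ Finset.range N, x ∉ Finset.range (j+1) → digit p j x = 0 := by
    intro x _ hx; simp only [Finset.mem_range, not_lt] at hx
    exact digit_eq_zero' p hp (by omega)
  rw [Finset.prod_subset hsub (by intro x h1 h2; rw [hz x h1 h2]; simp),
      Finset.prod_subset hsub (by intro x h1 h2; rw [hz x h1 h2]; simp)]
  exact map_smul (Ideal.Quotient.mkₐ k _) _ _

theorem factorial_ne_zero_k (p : ℕ) [hp : Fact p.Prime] [CharP k p] {n : ℕ} (h : n < p) :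
    ((Nat.factorial n : k)) ≠ 0 := by
  rw [Ne, CharP.cast_eq_zero_iff k p, hp.out.dvd_factorial]
  omega

theorem vElt_zero (p : ℕ) : vElt k p 0 = 1 := by
  simp [vElt, digit]

theorem vElt_mul (p : ℕ) [hp : Fact p.Prime] [CharP k p] (i j : ℕ) :
    vElt k p i * vElt k p j = (((i+j).choose i : k)) • vElt k p (i+j) := by
  have hp2 : 2 ≤ p := hp.out.two_le
  set N := i + j + 1 with hN
  rw [vElt_eq_prod p hp2 i N (by omega), vElt_eq_prod p hp2 j N (by omega),
      vElt_eq_prod p hp2 (i+j) N (by omega)]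
  rw [smul_mul_smul_comm, ← map_mul, ← Finset.prod_mul_distrib, ← Finset.prod_mul_distrib]
  simp_rw [← pow_add]
  by_cases hc : ∀ l, digit p i l + digit p j l < p
  · have hdig : ∀ l, digit p (i+j) l = digit p i l + digit p j l := by
      intro l
      rw [digit_eq p hp2, digit_eq p hp2, digit_eq p hp2]
      exact digit_add_of_nocarry p i j hp2
        (fun l => by rw [← digit_eq p hp2, ← digit_eq p hp2]; exact hc l) l
    have hscal : (∏ l ∈ Finset.range N, ((Nat.factorial (digit p i l) : k))⁻¹ *
        ((Nat.factorial (digit p j l) : k))⁻¹) =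
        ((i+j).choose i : k) * ∏ l ∈ Finset.range N, ((Nat.factorial (digit p (i+j) l) : k))⁻¹ := by
      have hlucas : (((i+j).choose i : k)) =
          ∏ l ∈ Finset.range N, (((digit p (i+j) l).choose (digit p i l) : k)) := by
        have hb1 : i + j < p ^ N := lt_of_lt_of_le (by have := Nat.lt_two_pow_self (n := N); omega)
          (Nat.pow_le_pow_left hp2 N)
        have hb2 : i < p ^ N := lt_of_le_of_lt (by omega) hb1
        have hl := Choose.choose_modEq_prod_range_choose (p := p) (n := i+j) (k := i) hb1 hb2
        have h0 : (((i+j).choose i : ℤ) : ZMod p) =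
            ((∏ l ∈ Finset.range N, ((i+j) / p ^ l % p).choose (i / p ^ l % p) : ℤ) : ZMod p) :=
          (ZMod.intCast_eq_intCast_iff _ _ _).mpr hl
        have h3 : (((i+j).choose i : ℕ) : ZMod p) =
            ((∏ l ∈ Finset.range N, ((i+j) / p ^ l % p).choose (i / p ^ l % p) : ℕ) : ZMod p) := by
          exact_mod_cast h0
        have h4 := congrArg (ZMod.castHom (dvd_refl p) k) h3
        rw [map_natCast, map_natCast] at h4
        rw [h4, Nat.cast_prod]
        refine Finset.prod_congr rfl fun l _ => ?_
        rw [digit_eq p hp2, digit_eq p hp2]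
      rw [hlucas, ← Finset.prod_mul_distrib]
      refine Finset.prod_congr rfl fun l _ => ?_
      have hdi := digit_lt p hp2 i l
      have hdj := digit_lt p hp2 j l
      have hfact := Nat.choose_mul_factorial_mul_factorial
        (Nat.le_add_right (digit p i l) (digit p j l))
      rw [Nat.add_sub_cancel_left] at hfact
      have hcast : (((digit p i l + digit p j l).choose (digit p i l) : k)) *
          (Nat.factorial (digit p i l) : k) * (Nat.factorial (digit p j l) : k) =
          (Nat.factorial (digit p i l + digit p j l) : k) := by exact_mod_cast congrArg _ hfact
      have h1 := factorial_ne_zero_k (k := k) p hdi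
      have h2 := factorial_ne_zero_k (k := k) p hdj
      have h3 := factorial_ne_zero_k (k := k) p (hc l)
      rw [hdig]
      field_simp
      linear_combination -hcast
    rw [hscal]
    simp_rw [hdig]
    rw [mul_smul]
  · push_neg at hc
    obtain ⟨l₀, hl₀⟩ := hc
    have hl₀N : l₀ < N := by
      by_contra hcon
      push_neg at hcon
      rw [digit_eq_zero' p hp2 (by omega), digit_eq_zero' p hp2 (by omega)] at hl₀
      omega
    have hmem : (∏ l ∈ Finset.range N, MvPolynomial.X l ^ (digit p i l + digit p j l) :
        MvPolynomial ℕ k) ∈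
        Ideal.span (Set.range fun i : ℕ => (MvPolynomial.X i : MvPolynomial ℕ k) ^ p) := by
      rw [← Finset.mul_prod_erase _ _ (Finset.mem_range.mpr hl₀N)]
      have hX : (MvPolynomial.X l₀ : MvPolynomial ℕ k) ^ (digit p i l₀ + digit p j l₀) =
          MvPolynomial.X l₀ ^ p * MvPolynomial.X l₀ ^ (digit p i l₀ + digit p j l₀ - p) := by
        rw [← pow_add]; congr 1; omega
      rw [hX, mul_assoc]
      exact Ideal.mul_mem_right _ _ (Ideal.subset_span ⟨l₀, rfl⟩)
    rw [(Ideal.Quotient.eq_zero_iff_mem).mpr hmem, smul_zero]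
    have hzero : (((i+j).choose i : k)) = 0 := by
      rw [CharP.cast_eq_zero_iff k p]
      exact prime_dvd_choose_of_carry p i j l₀
        (by rw [← digit_eq p hp2, ← digit_eq p hp2]; omega)
    rw [hzero, zero_smul]

/-! ### Auxiliary lemmas: coefficient extraction on `N ⊗ k[X]` -/

variable (k) in
def Ecoef (N : Type) [AddCommGroup N] [Module k N] (j : ℕ) : N ⊗[k] k[X] →ₗ[k] N :=
  (TensorProduct.rid k N).toLinearMap ∘ₗ LinearMap.lTensor N (lcoeff k j)

variable {N : Type} [AddCommGroup N] [Module k N]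

theorem Ecoef_tmul (j : ℕ) (n : N) (f : k[X]) :
    Ecoef k N j (n ⊗ₜ[k] f) = f.coeff j • n := by
  simp [Ecoef]

theorem vAct_eq_Ecoef {M : Type} [AddCommGroup M] [Module k M]
    (ρ : M →ₗ[k] M ⊗[k] k[X]) (j : ℕ) (m : M) :
    vAct ρ j m = Ecoef k M j (ρ m) := rfl

theorem exists_repr (t : N ⊗[k] k[X]) : ∃ s : Finset ℕ, ∀ s' : Finset ℕ, s ⊆ s' →
    t = ∑ j ∈ s', (Ecoef k N j t) ⊗ₜ[k] ((X : k[X]) ^ j) := by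
  induction t with
  | zero => exact ⟨∅, fun s' _ => by simp⟩
  | tmul n f =>
    refine ⟨f.support, fun s' hs => ?_⟩
    have hf : ∑ j ∈ s', f.coeff j • (X : k[X]) ^ j = f := by
      rw [← Finset.sum_subset hs (fun x _ hx => by
        rw [Polynomial.notMem_support_iff.mp hx, zero_smul])]
      conv_rhs => rw [f.as_sum_support]
      exact Finset.sum_congr rfl fun j _ => by rw [Polynomial.smul_X_eq_monomial]
    calc n ⊗ₜ[k] f = n ⊗ₜ[k] (∑ j ∈ s', f.coeff j • (X : k[X]) ^ j) := by rw [hf]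
      _ = ∑ j ∈ s', (Ecoef k N j (n ⊗ₜ[k] f)) ⊗ₜ[k] ((X : k[X]) ^ j) := by
          rw [tmul_sum]
          exact Finset.sum_congr rfl fun j _ => by
            rw [Ecoef_tmul, smul_tmul]
  | add t u ht hu =>
    obtain ⟨s₁, h₁⟩ := ht
    obtain ⟨s₂, h₂⟩ := hu
    refine ⟨s₁ ∪ s₂, fun s' hs => ?_⟩
    conv_lhs => rw [h₁ s' (Finset.union_subset_iff.mp hs).1,
      h₂ s' (Finset.union_subset_iff.mp hs).2]
    rw [← Finset.sum_add_distrib]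
    exact Finset.sum_congr rfl fun j _ => by rw [map_add, add_tmul]

theorem coef_ext {t u : N ⊗[k] k[X]} (h : ∀ j, Ecoef k N j t = Ecoef k N j u) : t = u := by
  obtain ⟨s₁, h₁⟩ := exists_repr t
  obtain ⟨s₂, h₂⟩ := exists_repr u
  rw [h₁ (s₁ ∪ s₂) Finset.subset_union_left, h₂ (s₁ ∪ s₂) Finset.subset_union_right]
  exact Finset.sum_congr rfl fun j _ => by rw [h j]

theorem Ecoef_support_finite (t : N ⊗[k] k[X]) : {j : ℕ | Ecoef k N j t ≠ 0}.Finite := by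
  obtain ⟨s, hs⟩ := exists_repr t
  refine Set.Finite.subset s.finite_toSet fun j hj => ?_
  by_contra hjs
  apply hj
  rw [hs s subset_rfl, map_sum]
  rw [Finset.sum_eq_zero]
  intro x hx
  rw [Ecoef_tmul, Polynomial.coeff_X_pow]
  have hne : j ≠ x := fun h => hjs (h ▸ hx)
  rw [if_neg hne, zero_smul]

theorem gaComul_X_pow (n : ℕ) : gaComul k ((X : k[X]) ^ n) =
    ∑ a ∈ Finset.range (n+1),
      (n.choose a : k) • (((X : k[X]) ^ a) ⊗ₜ[k] ((X : k[X]) ^ (n-a))) := by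
  have hX : gaComul k (X : k[X]) =
      (X : k[X]) ⊗ₜ[k] (1 : k[X]) + (1 : k[X]) ⊗ₜ[k] (X : k[X]) := aeval_X _
  have hcomm : Commute ((X : k[X]) ⊗ₜ[k] (1 : k[X])) ((1 : k[X]) ⊗ₜ[k] (X : k[X])) := by
    unfold Commute SemiconjBy
    simp [Algebra.TensorProduct.tmul_mul_tmul]
  rw [map_pow, hX, hcomm.add_pow]
  refine Finset.sum_congr rfl fun a _ => ?_
  rw [Algebra.TensorProduct.tmul_pow, Algebra.TensorProduct.tmul_pow,
    Algebra.TensorProduct.tmul_mul_tmul, one_pow, one_pow, mul_one, one_mul,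
    mul_comm, ← nsmul_eq_mul, ← Nat.cast_smul_eq_nsmul k]

/-! ### Main theorem -/

theorem statement0 (p : ℕ) [Fact p.Prime] [CharP k p] [IsAlgClosed k]
    {M : Type} [AddCommGroup M] [Module k M] [Module (kGaAlg k p) M]
    [IsScalarTower k (kGaAlg k p) M] :
    ((∀ m : M, {j : ℕ | vElt k p j • m ≠ 0}.Finite) →
      ∃ ρ : M →ₗ[k] M ⊗[k] k[X],
        (∀ m : M, ρ m = ∑ᶠ j : ℕ, (vElt k p j • m) ⊗ₜ[k] ((X : k[X]) ^ j)) ∧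
        IsGaComodule ρ ∧
        (∀ (j : ℕ) (m : M), vAct ρ j m = vElt k p j • m)) ∧
    (∀ (M' : Type) (_ : AddCommGroup M') (_ : Module k M')
        (ρ' : M' →ₗ[k] M' ⊗[k] k[X]), IsGaComodule ρ' →
        ∀ m' : M', {j : ℕ | vAct ρ' j m' ≠ 0}.Finite) := by
  classical
  constructor
  · intro hfin
    set T : M → Finset ℕ := fun m => (hfin m).toFinset with hT
    have hTmem : ∀ (m : M) (j : ℕ), j ∈ T m ↔ vElt k p j • m ≠ 0 :=
      fun m j => Set.Finite.mem_toFinset _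
    have hTnot : ∀ (m : M) (j : ℕ), j ∉ T m → vElt k p j • m = 0 := by
      intro m j h
      by_contra hne
      exact h ((hTmem m j).mpr hne)
    have key : ∀ (m : M) (s : Finset ℕ), (∀ j, vElt k p j • m ≠ 0 → j ∈ s) →
        ∑ j ∈ s, (vElt k p j • m) ⊗ₜ[k] ((X : k[X]) ^ j) =
        ∑ j ∈ T m, (vElt k p j • m) ⊗ₜ[k] ((X : k[X]) ^ j) := by
      intro m s hsub
      refine (Finset.sum_subset (fun j hj => hsub j ((hTmem m j).mp hj)) ?_).symm
      intro x _ hxT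
      rw [hTnot m x hxT, zero_tmul]
    have hsmul_comm : ∀ (c : k) (a : kGaAlg k p) (m : M), a • (c • m) = c • (a • m) := by
      intro c a m
      rw [← algebraMap_smul (kGaAlg k p) c m, ← mul_smul, mul_comm, mul_smul,
        algebraMap_smul]
    obtain ⟨ρ, hρ⟩ : ∃ ρ : M →ₗ[k] M ⊗[k] k[X],
        ∀ m : M, ρ m = ∑ j ∈ T m, (vElt k p j • m) ⊗ₜ[k] ((X : k[X]) ^ j) :=
      ⟨{ toFun := fun m => ∑ j ∈ T m, (vElt k p j • m) ⊗ₜ[k] ((X : k[X]) ^ j)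
         map_add' := by
          intro m m'
          have h1 : ∀ j, vElt k p j • (m + m') ≠ 0 → j ∈ T m ∪ T m' := by
            intro j hj
            rw [smul_add] at hj
            have hor : vElt k p j • m ≠ 0 ∨ vElt k p j • m' ≠ 0 := by
              by_contra hcon
              push_neg at hcon
              rw [hcon.1, hcon.2, add_zero] at hj
              exact hj rfl
            rcases hor with h | h
            · exact Finset.mem_union_left _ ((hTmem m j).mpr h)
            · exact Finset.mem_union_right _ ((hTmem m' j).mpr h)
          rw [← key (m + m') (T m ∪ T m') h1,
            ← key m (T m ∪ T m') (fun j hj => Finset.mem_union_left _ ((hTmem m j).mpr hj)),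
            ← key m' (T m ∪ T m') (fun j hj => Finset.mem_union_right _ ((hTmem m' j).mpr hj)),
            ← Finset.sum_add_distrib]
          exact Finset.sum_congr rfl fun j _ => by rw [smul_add, add_tmul]
         map_smul' := by
          intro c m
          simp only [RingHom.id_apply]
          have h1 : ∀ j, vElt k p j • (c • m) ≠ 0 → j ∈ T m := by
            intro j hj
            rw [hsmul_comm] at hj
            refine (hTmem m j).mpr fun hz => hj ?_
            rw [hz, smul_zero]
          rw [← key (c • m) (T m) h1, Finset.smul_sum]
          exact Finset.sum_congr rfl fun j _ => by rw [hsmul_comm, smul_tmul'] }, fun m => rfl⟩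
    have hEρ : ∀ (j : ℕ) (m : M), Ecoef k M j (ρ m) = vElt k p j • m := by
      intro j m
      rw [hρ, map_sum]
      have hterm : ∀ j' ∈ T m, Ecoef k M j ((vElt k p j' • m) ⊗ₜ[k] ((X : k[X]) ^ j')) =
          if j = j' then vElt k p j' • m else 0 := by
        intro j' _
        rw [Ecoef_tmul, Polynomial.coeff_X_pow, ite_smul, one_smul, zero_smul]
      rw [Finset.sum_congr rfl hterm, Finset.sum_ite_eq]
      by_cases hj : j ∈ T m
      · rw [if_pos hj]
      · rw [if_neg hj, hTnot m j hj]
    refine ⟨ρ, ?_, ⟨?_, ?_⟩, ?_⟩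
    · -- finsum formula
      intro m
      rw [hρ]
      refine (finsum_eq_sum_of_support_subset _ ?_).symm
      intro j hj
      simp only [Function.mem_support] at hj
      have : vElt k p j • m ≠ 0 := fun hz => hj (by rw [hz, zero_tmul])
      exact Finset.mem_coe.mpr ((hTmem m j).mpr this)
    · -- coassociativity
      intro m
      apply (LinearEquiv.eq_symm_apply _).mp
      apply coef_ext; intro j
      apply coef_ext; intro i
      -- LHS
      have hL1 : Ecoef k (M ⊗[k] k[X]) j (LinearMap.rTensor k[X] ρ (ρ m)) =
          ρ (vElt k p j • m) := by
        rw [hρ m, map_sum, map_sum]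
        have hterm : ∀ j' ∈ T m, Ecoef k (M ⊗[k] k[X]) j
            (LinearMap.rTensor k[X] ρ ((vElt k p j' • m) ⊗ₜ[k] ((X : k[X]) ^ j'))) =
            if j = j' then ρ (vElt k p j' • m) else 0 := by
          intro j' _
          rw [LinearMap.rTensor_tmul, Ecoef_tmul, Polynomial.coeff_X_pow,
            ite_smul, one_smul, zero_smul]
        rw [Finset.sum_congr rfl hterm, Finset.sum_ite_eq]
        by_cases hj : j ∈ T m
        · rw [if_pos hj]
        · rw [if_neg hj, hTnot m j hj, map_zero]
      have hL : Ecoef k M i (Ecoef k (M ⊗[k] k[X]) j (LinearMap.rTensor k[X] ρ (ρ m))) =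
          (((i+j).choose i : k)) • (vElt k p (i+j) • m) := by
        rw [hL1, hEρ, ← mul_smul, vElt_mul, smul_assoc]
      rw [hL]
      -- RHS
      have hR1 : (TensorProduct.assoc k M (Polynomial k) (Polynomial k)).symm
          (LinearMap.lTensor M (gaComul k).toLinearMap (ρ m)) =
          ∑ n ∈ T m, ∑ a ∈ Finset.range (n+1), (n.choose a : k) •
            (((vElt k p n • m) ⊗ₜ[k] ((X : k[X]) ^ a)) ⊗ₜ[k] ((X : k[X]) ^ (n-a))) := by
        rw [hρ m, map_sum, map_sum]
        refine Finset.sum_congr rfl fun n _ => ?_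
        rw [LinearMap.lTensor_tmul]
        have : (gaComul k).toLinearMap ((X : k[X]) ^ n) = gaComul k ((X : k[X]) ^ n) := rfl
        rw [this, gaComul_X_pow, tmul_sum, map_sum]
        refine Finset.sum_congr rfl fun a _ => ?_
        rw [tmul_smul, map_smul, TensorProduct.assoc_symm_tmul]
      rw [hR1, map_sum, map_sum]
      have hterm2 : ∀ n ∈ T m,
          Ecoef k M i (Ecoef k (M ⊗[k] k[X]) j (∑ a ∈ Finset.range (n+1), (n.choose a : k) •
            (((vElt k p n • m) ⊗ₜ[k] ((X : k[X]) ^ a)) ⊗ₜ[k] ((X : k[X]) ^ (n-a))))) =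
          if n = i + j then (((i+j).choose i : k)) • (vElt k p (i+j) • m) else 0 := by
        intro n _
        rw [map_sum, map_sum]
        have hterm3 : ∀ a ∈ Finset.range (n+1),
            Ecoef k M i (Ecoef k (M ⊗[k] k[X]) j ((n.choose a : k) •
              (((vElt k p n • m) ⊗ₜ[k] ((X : k[X]) ^ a)) ⊗ₜ[k] ((X : k[X]) ^ (n-a))))) =
            if i = a ∧ j = n - a then (n.choose a : k) • (vElt k p n • m) else 0 := by
          intro a _
          simp only [map_smul, Ecoef_tmul, Polynomial.coeff_X_pow]
          by_cases h1 : i = a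
          · by_cases h2 : j = n - a
            · rw [if_pos h2, if_pos h1, one_smul, one_smul, if_pos ⟨h1, h2⟩]
            · rw [if_neg h2, zero_smul, smul_zero, if_neg (fun h => h2 h.2)]
          · rw [if_neg h1, zero_smul, smul_zero, smul_zero, if_neg (fun h => h1 h.1)]
        rw [Finset.sum_congr rfl hterm3]
        by_cases hn : n = i + j
        · subst hn
          rw [Finset.sum_eq_single i]
          · rw [if_pos ⟨rfl, by omega⟩, if_pos rfl]
          · intro a _ ha
            rw [if_neg (fun h => ha h.1.symm)]
          · intro h
            exact absurd (Finset.mem_range.mpr (by omega)) h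
        · rw [if_neg hn]
          refine Finset.sum_eq_zero fun a ha => ?_
          rw [Finset.mem_range] at ha
          refine if_neg fun h => hn ?_
          obtain ⟨h1, h2⟩ := h
          omega
      rw [Finset.sum_congr rfl hterm2, Finset.sum_ite_eq']
      by_cases hin : i + j ∈ T m
      · rw [if_pos hin]
      · rw [if_neg hin, hTnot m (i+j) hin, smul_zero]
    · -- counit
      intro m
      rw [hρ, map_sum, map_sum]
      have hterm : ∀ j ∈ T m,
          (TensorProduct.rid k M) (LinearMap.lTensor M (gaCounit k).toLinearMap
            ((vElt k p j • m) ⊗ₜ[k] ((X : k[X]) ^ j))) =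
          if j = 0 then vElt k p j • m else 0 := by
        intro j _
        rw [LinearMap.lTensor_tmul]
        have : (gaCounit k).toLinearMap ((X : k[X]) ^ j) = gaCounit k ((X : k[X]) ^ j) := rfl
        rw [this, gaCounit, map_pow, aeval_X, TensorProduct.rid_tmul, zero_pow_eq,
          ite_smul, one_smul, zero_smul]
      rw [Finset.sum_congr rfl hterm, Finset.sum_ite_eq']
      by_cases h0 : (0 : ℕ) ∈ T m
      · rw [if_pos h0, vElt_zero, one_smul]
      · rw [if_neg h0]
        have := hTnot m 0 h0
        rw [vElt_zero, one_smul] at this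
        rw [this]
    · -- vAct
      intro j m
      rw [vAct_eq_Ecoef, hEρ]
  · -- converse
    intro M' _ _ ρ' _ m'
    exact Ecoef_support_finite (ρ' m')
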